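/- Let C be an additive category, F : C → C an additive automorphism, D an additive category, and G : C → D an additive functor equipped with a natural isomorphism η : G ∘ F ≅ G. Then G factors through the projection: there exists an additive functor H : C/F → D which agrees with G on objects, sends a homogeneous morphism f : X → F^j Y of degree j to the composite of G(f) with the isomorphism G(F^j Y) ≅ G(Y) obtained by iterating η, and satisfies H ∘ π = G as functors C → D. -/

import Mathlib

/-!
Statement 5: Let `C` be an additive category, `F : C → C` an additive automorphism,
`D` an additive category, and `G : C → D` an additive functor equipped with a natural
isomorphism `η : G ∘ F ≅ G`. Then `G` factors through the projection `π : C → C/F`: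
there exists an additive functor `H : C/F → D` agreeing with `G` on objects, sending a
homogeneous morphism `f : X → F^j Y` of degree `j` to `G(f)` composed with the
isomorphism `G(F^j Y) ≅ G(Y)` obtained by iterating `η`, and satisfying `H ∘ π = G`.
-/

open CategoryTheory CategoryTheory.Limits DirectSum

universe v u

namespace OrbitFormalization

variable (C : Type u) [Category.{v} C] [Preadditive C] [HasShift C ℤ]
  [∀ n : ℤ, (shiftFunctor C n).Additive]

/-- Objects of the orbit category `C/F`: the same as the objects of `C`. -/
structure Orbit where
  /-- the underlying object of `C` -/
  un : C

/-- Morphisms of the orbit category: `⊕_{j ∈ ℤ} Hom_C(X, F^j Y)`. -/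
abbrev OrbitHom (X Y : C) : Type _ :=
  DirectSum ℤ (fun j => X ⟶ (shiftFunctor C j).obj Y)

/-- Composition of homogeneous components: the composite of `f : X ⟶ F^r Y` (degree `r`)
and `g : Y ⟶ F^s Z` (degree `s`) is `F^r(g) ∘ f`, of degree `r + s`. -/
def hcomp {X Y Z : C} {r s : ℤ} (f : X ⟶ (shiftFunctor C r).obj Y)
    (g : Y ⟶ (shiftFunctor C s).obj Z) : X ⟶ (shiftFunctor C (r + s)).obj Z :=
  f ≫ (shiftFunctor C r).map g ≫ (shiftFunctorAdd' C s r (r + s) (add_comm s r)).inv.app Z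

/-- Composition of homogeneous components, as a bilinear map. -/
def hcompHom (X Y Z : C) (r s : ℤ) :
    (X ⟶ (shiftFunctor C r).obj Y) →+ ((Y ⟶ (shiftFunctor C s).obj Z) →+ OrbitHom C X Z) :=
  AddMonoidHom.mk'
    (fun f => AddMonoidHom.mk'
      (fun g => DirectSum.of (fun j => X ⟶ (shiftFunctor C j).obj Z) (r + s) (hcomp C f g))
      (fun g g' => by
        rw [← map_add]
        simp [hcomp, Functor.map_add, Preadditive.comp_add, Preadditive.add_comp]))
    (fun f f' => by
      ext g
      simp only [AddMonoidHom.mk'_apply, AddMonoidHom.add_apply, ← map_add]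
      congr 1
      simp [hcomp, Preadditive.add_comp])

/-- Composition in the orbit category, as the unique bilinear extension of the
composition of homogeneous components. -/
def ocomp {X Y Z : C} : OrbitHom C X Y →+ (OrbitHom C Y Z →+ OrbitHom C X Z) :=
  DirectSum.toAddMonoid fun r =>
    (DirectSum.toAddMonoid fun s => (hcompHom C X Y Z r s).flip).flip

/-- The degree zero inclusion `Hom_C(X, Y) → Hom_C(X, F^0 Y)`. -/
def e₀ {X Y : C} (f : X ⟶ Y) : X ⟶ (shiftFunctor C (0 : ℤ)).obj Y :=
  f ≫ (shiftFunctorZero C ℤ).inv.app Y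

/-- The `CategoryStruct` of the orbit category `C/F`. -/
instance orbitStruct : CategoryStruct (Orbit C) where
  Hom X Y := OrbitHom C X.un Y.un
  id X := DirectSum.of _ 0 (e₀ C (𝟙 X.un))
  comp f g := ocomp C f g

instance (X Y : Orbit C) : AddCommGroup (X ⟶ Y) :=
  inferInstanceAs (AddCommGroup (OrbitHom C X.un Y.un))

/-- The orbit category `C/F`, given proofs of the category axioms. -/
def orbitCategory
    (h₁ : ∀ {X Y : Orbit C} (f : X ⟶ Y), 𝟙 X ≫ f = f)
    (h₂ : ∀ {X Y : Orbit C} (f : X ⟶ Y), f ≫ 𝟙 Y = f)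
    (h₃ : ∀ {W X Y Z : Orbit C} (f : W ⟶ X) (g : X ⟶ Y) (h : Y ⟶ Z),
      (f ≫ g) ≫ h = f ≫ g ≫ h) :
    Category (Orbit C) :=
  { id_comp := h₁, comp_id := h₂, assoc := h₃ }

/-- The action of the projection functor `π : C → C/F` on morphisms:
a morphism of `C` is placed in the degree `0` summand. -/
def oprojMap {X Y : C} (f : X ⟶ Y) : OrbitHom C X Y :=
  DirectSum.of _ 0 (e₀ C f)

/-- The projection functor `π : C → C/F`. -/
def oproj (h₁ : ∀ {X Y : Orbit C} (f : X ⟶ Y), 𝟙 X ≫ f = f)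
    (h₂ : ∀ {X Y : Orbit C} (f : X ⟶ Y), f ≫ 𝟙 Y = f)
    (h₃ : ∀ {W X Y Z : Orbit C} (f : W ⟶ X) (g : X ⟶ Y) (h : Y ⟶ Z),
      (f ≫ g) ≫ h = f ≫ g ≫ h)
    (p : ∀ {X Y Z : C} (f : X ⟶ Y) (g : Y ⟶ Z),
      oprojMap C (f ≫ g) = ocomp C (oprojMap C f) (oprojMap C g)) :
    @CategoryTheory.Functor C _ (Orbit C) (orbitCategory C @h₁ @h₂ @h₃) := by
  letI : Category (Orbit C) := orbitCategory C @h₁ @h₂ @h₃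
  exact { obj := Orbit.mk, map := fun f => oprojMap C f,
          map_id := fun _ => rfl, map_comp := fun f g => p f g }


universe v₂ u₂

variable {D : Type u₂} [Category.{v₂} D] [Preadditive D] [HasFiniteBiproducts D]

/-- The action on morphisms of the induced functor `H : C/F → D`, determined by a
family of isomorphisms `ε j Y : G(F^j Y) ≅ G(Y)`: the homogeneous morphism
`f : X → F^j Y` of degree `j` is sent to `G(f) ≫ (ε j Y).hom`. -/
def inducedMap (G : C ⥤ D) [G.Additive]
    (ε : ∀ (j : ℤ) (Y : C), G.obj ((shiftFunctor C j).obj Y) ≅ G.obj Y)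
    {X Y : Orbit C} (φ : X ⟶ Y) : G.obj X.un ⟶ G.obj Y.un :=
  DirectSum.toAddMonoid
    (fun j => AddMonoidHom.mk' (fun f : X.un ⟶ (shiftFunctor C j).obj Y.un =>
        G.map f ≫ (ε j Y.un).hom)
      (fun f f' => by simp [Functor.map_add, Preadditive.add_comp])) φ

/-- The induced functor `H : C/F → D`, given the functoriality proofs. -/
def inducedFunctor
    (h₁ : ∀ {X Y : Orbit C} (f : X ⟶ Y), 𝟙 X ≫ f = f)
    (h₂ : ∀ {X Y : Orbit C} (f : X ⟶ Y), f ≫ 𝟙 Y = f)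
    (h₃ : ∀ {W X Y Z : Orbit C} (f : W ⟶ X) (g : X ⟶ Y) (h : Y ⟶ Z),
      (f ≫ g) ≫ h = f ≫ g ≫ h)
    (G : C ⥤ D) [G.Additive]
    (ε : ∀ (j : ℤ) (Y : C), G.obj ((shiftFunctor C j).obj Y) ≅ G.obj Y)
    (q₁ : ∀ X : Orbit C, inducedMap C G ε (𝟙 X) = 𝟙 (G.obj X.un))
    (q₂ : ∀ {X Y Z : Orbit C} (f : X ⟶ Y) (g : Y ⟶ Z),
      inducedMap C G ε (f ≫ g) = inducedMap C G ε f ≫ inducedMap C G ε g) :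
    @CategoryTheory.Functor (Orbit C) (orbitCategory C @h₁ @h₂ @h₃) D _ := by
  letI : Category (Orbit C) := orbitCategory C @h₁ @h₂ @h₃
  exact { obj := fun X => G.obj X.un, map := fun φ => inducedMap C G ε φ,
          map_id := q₁, map_comp := fun f g => q₂ f g }

/-- The body of Statement 5. -/
def Statement5Body
    (h₁ : ∀ {X Y : Orbit C} (f : X ⟶ Y), 𝟙 X ≫ f = f)
    (h₂ : ∀ {X Y : Orbit C} (f : X ⟶ Y), f ≫ 𝟙 Y = f)
    (h₃ : ∀ {W X Y Z : Orbit C} (f : W ⟶ X) (g : X ⟶ Y) (h : Y ⟶ Z),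
      (f ≫ g) ≫ h = f ≫ g ≫ h)
    (hadd : ∀ (X Y Z : Orbit C) (f f' : X ⟶ Y) (g : Y ⟶ Z),
      (f + f') ≫ g = f ≫ g + f' ≫ g)
    (hadd' : ∀ (X Y Z : Orbit C) (f : X ⟶ Y) (g g' : Y ⟶ Z),
      f ≫ (g + g') = f ≫ g + f ≫ g')
    (p : ∀ {X Y Z : C} (f : X ⟶ Y) (g : Y ⟶ Z),
      oprojMap C (f ≫ g) = ocomp C (oprojMap C f) (oprojMap C g))
    (G : C ⥤ D) [G.Additive] (η : shiftFunctor C (1 : ℤ) ⋙ G ≅ G) : Prop :=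
  letI cat : Category (Orbit C) := orbitCategory C @h₁ @h₂ @h₃
  letI pre : Preadditive (Orbit C) :=
    { homGroup := fun X Y => (inferInstance : AddCommGroup (OrbitHom C X.un Y.un)),
      add_comp := hadd, comp_add := hadd' }
  -- `ε j Y : G(F^j Y) ≅ G Y` is the isomorphism obtained by iterating `η`:
  ∃ ε : ∀ (j : ℤ) (Y : C), G.obj ((shiftFunctor C j).obj Y) ≅ G.obj Y,
    (∀ Y : C, ε 0 Y = G.mapIso ((shiftFunctorZero C ℤ).app Y)) ∧
    (∀ (j : ℤ) (Y : C),
      ε (j + 1) Y =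
        G.mapIso ((shiftFunctorAdd' C j 1 (j + 1) rfl).app Y) ≪≫
          η.app ((shiftFunctor C j).obj Y) ≪≫ ε j Y) ∧
    ∃ (q₁ : ∀ X : Orbit C, inducedMap C G ε (𝟙 X) = 𝟙 (G.obj X.un))
      (q₂ : ∀ {X Y Z : Orbit C} (f : X ⟶ Y) (g : Y ⟶ Z),
        inducedMap C G ε (f ≫ g) = inducedMap C G ε f ≫ inducedMap C G ε g),
      -- `H` is additive:
      (inducedFunctor C @h₁ @h₂ @h₃ G ε q₁ @q₂).Additive ∧
      -- `H` agrees with `G` on objects: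
      (∀ X : C, (inducedFunctor C @h₁ @h₂ @h₃ G ε q₁ @q₂).obj (Orbit.mk X) = G.obj X) ∧
      -- `H` sends a homogeneous morphism `f : X ⟶ F^j Y` of degree `j` to
      -- `G(f) ≫ (ε j Y).hom`:
      (∀ (j : ℤ) (X Y : C) (f : X ⟶ (shiftFunctor C j).obj Y),
        (inducedFunctor C @h₁ @h₂ @h₃ G ε q₁ @q₂).map
            (show Orbit.mk X ⟶ Orbit.mk Y from
              DirectSum.of (fun i => X ⟶ (shiftFunctor C i).obj Y) j f) =
          G.map f ≫ (ε j Y).hom) ∧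
      -- `H ∘ π = G` as functors `C ⥤ D`:
      oproj C @h₁ @h₂ @h₃ @p ⋙ inducedFunctor C @h₁ @h₂ @h₃ G ε q₁ @q₂ = G

set_option linter.unusedSectionVars false
section Aux

variable {C}

lemma of_congr {X Z : C} {r r' : ℤ} (h : r = r') (f : X ⟶ (shiftFunctor C r).obj Z) :
    DirectSum.of (fun j => X ⟶ (shiftFunctor C j).obj Z) r f =
      DirectSum.of (fun j => X ⟶ (shiftFunctor C j).obj Z) r'
        (f ≫ eqToHom (by rw [h])) := by
  subst h; simp

lemma ocomp_of {X Y Z : C} {r s : ℤ} (f : X ⟶ (shiftFunctor C r).obj Y)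
    (g : Y ⟶ (shiftFunctor C s).obj Z) :
    ocomp C (DirectSum.of (fun j => X ⟶ (shiftFunctor C j).obj Y) r f)
      (DirectSum.of (fun j => Y ⟶ (shiftFunctor C j).obj Z) s g) =
    DirectSum.of (fun j => X ⟶ (shiftFunctor C j).obj Z) (r + s) (hcomp C f g) := by
  simp only [ocomp, DirectSum.toAddMonoid_of, AddMonoidHom.flip_apply]
  rfl

lemma sfa_congr (a b c c' : ℤ) (h : a + b = c) (h' : c = c') (X : C) :
    (shiftFunctorAdd' C a b c' (h.trans h')).inv.app X =
      (shiftFunctorAdd' C a b c h).inv.app X ≫ eqToHom (by rw [h']) := by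
  subst h'; simp

lemma hcomp_e₀_left {X Y Z : C} {s : ℤ} (f : X ⟶ Y) (g : Y ⟶ (shiftFunctor C s).obj Z) :
    hcomp C (e₀ C f) g = (f ≫ g) ≫ eqToHom (by rw [zero_add]) := by
  have h1 : (shiftFunctorAdd' C s 0 (0 + s) (add_comm s 0)).inv.app Z =
      (shiftFunctorAdd' C s 0 s (add_zero s)).inv.app Z ≫ eqToHom (by rw [zero_add]) :=
    sfa_congr s 0 s (0 + s) (add_zero s) (zero_add s).symm Z
  rw [hcomp, e₀, h1, shiftFunctorAdd'_add_zero_inv_app]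
  have nat : (shiftFunctorZero C ℤ).inv.app Y ≫ (shiftFunctor C (0 : ℤ)).map g =
      g ≫ (shiftFunctorZero C ℤ).inv.app ((shiftFunctor C s).obj Z) := by
    simpa using ((shiftFunctorZero C ℤ).inv.naturality g).symm
  slice_lhs 2 3 => rw [nat]
  simp

lemma hcomp_e₀_right {X Y Z : C} {r : ℤ} (f : X ⟶ (shiftFunctor C r).obj Y) (g : Y ⟶ Z) :
    hcomp C f (e₀ C g) = (f ≫ (shiftFunctor C r).map g) ≫ eqToHom (by rw [add_zero]) := by
  have h1 : (shiftFunctorAdd' C 0 r (r + 0) (add_comm 0 r)).inv.app Z =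
      (shiftFunctorAdd' C 0 r r (zero_add r)).inv.app Z ≫ eqToHom (by rw [add_zero]) :=
    sfa_congr 0 r r (r + 0) (zero_add r) (add_zero r).symm Z
  rw [hcomp, e₀, h1, shiftFunctorAdd'_zero_add_inv_app]
  simp [← Functor.map_comp_assoc]

lemma orbit_id_comp {X Y : Orbit C} (f : X ⟶ Y) : 𝟙 X ≫ f = f := by
  show ocomp C (DirectSum.of _ 0 (e₀ C (𝟙 X.un))) f = f
  induction f using DirectSum.induction_on with
  | zero => simp
  | of s g =>
    rw [ocomp_of, hcomp_e₀_left]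
    rw [of_congr (zero_add s), Category.id_comp]
    simp
  | add f g hf hg => simp only [map_add, AddMonoidHom.add_apply, hf, hg]

lemma orbit_comp_id {X Y : Orbit C} (f : X ⟶ Y) : f ≫ 𝟙 Y = f := by
  show ocomp C f (DirectSum.of _ 0 (e₀ C (𝟙 Y.un))) = f
  induction f using DirectSum.induction_on with
  | zero => simp [map_zero]
  | of r g =>
    rw [ocomp_of, hcomp_e₀_right]
    rw [of_congr (add_zero r)]
    simp
  | add f g hf hg => simp only [map_add, AddMonoidHom.add_apply, hf, hg]

lemma orbit_assoc {W X Y Z : Orbit C} (f : W ⟶ X) (g : X ⟶ Y) (h : Y ⟶ Z) :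
    (f ≫ g) ≫ h = f ≫ g ≫ h := by
  show ocomp C (ocomp C f g) h = ocomp C f (ocomp C g h)
  induction f using DirectSum.induction_on with
  | zero => simp [map_zero]
  | add f f' hf hf' => simp only [map_add, AddMonoidHom.add_apply, hf, hf']
  | of r f =>
    induction g using DirectSum.induction_on with
    | zero => simp [map_zero]
    | add g g' hg hg' => simp only [map_add, AddMonoidHom.add_apply, hg, hg']
    | of s g =>
      induction h using DirectSum.induction_on with
      | zero => simp [map_zero]
      | add h h' hh hh' => simp only [map_add, AddMonoidHom.add_apply, hh, hh']
      | of t h =>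
        rw [ocomp_of, ocomp_of, ocomp_of, ocomp_of,
          of_congr (add_assoc r s t)]
        congr 1
        have nat : (shiftFunctorAdd' C s r (r + s) (add_comm s r)).inv.app Y.un ≫
            (shiftFunctor C (r + s)).map h =
            (shiftFunctor C r).map ((shiftFunctor C s).map h) ≫
              (shiftFunctorAdd' C s r (r + s) (add_comm s r)).inv.app
                ((shiftFunctor C t).obj Z.un) := by
          simpa using ((shiftFunctorAdd' C s r (r + s) (add_comm s r)).inv.naturality h).symm
        simp only [hcomp, Category.assoc, Functor.map_comp]
        slice_lhs 3 4 => rw [nat]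
        rw [sfa_congr t (r + s) (r + (s + t)) ((r + s) + t) (by omega) (by omega) Z.un]
        simp only [Category.assoc, eqToHom_trans, eqToHom_refl, Category.comp_id]
        rw [← shiftFunctorAdd'_assoc_inv_app t s r (s + t) (r + s) (r + (s + t))
          (add_comm t s) (add_comm s r) (by omega) Z.un]

end Aux
section Eps

variable {C}
variable {D' : Type u₂} [Category.{v₂} D'] (G : C ⥤ D')
  (η : shiftFunctor C (1 : ℤ) ⋙ G ≅ G)

/-- one step up for the iterated isomorphism -/
def epsStep (j : ℤ) (e : ∀ Y : C, G.obj ((shiftFunctor C j).obj Y) ≅ G.obj Y) (Y : C) :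
    G.obj ((shiftFunctor C (j + 1)).obj Y) ≅ G.obj Y :=
  G.mapIso ((shiftFunctorAdd' C j 1 (j + 1) rfl).app Y) ≪≫
    η.app ((shiftFunctor C j).obj Y) ≪≫ e Y

/-- one step down for the iterated isomorphism -/
def epsStepInv (j : ℤ) (e : ∀ Y : C, G.obj ((shiftFunctor C (j + 1)).obj Y) ≅ G.obj Y)
    (Y : C) : G.obj ((shiftFunctor C j).obj Y) ≅ G.obj Y :=
  (η.app ((shiftFunctor C j).obj Y)).symm ≪≫
    (G.mapIso ((shiftFunctorAdd' C j 1 (j + 1) rfl).app Y)).symm ≪≫ e Y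

/-- the iterated isomorphism `G(F^j Y) ≅ G Y` -/
def eps : ∀ (j : ℤ) (Y : C), G.obj ((shiftFunctor C j).obj Y) ≅ G.obj Y
  | Int.ofNat 0 => fun Y => G.mapIso ((shiftFunctorZero C ℤ).app Y)
  | Int.ofNat (n + 1) => epsStep G η (Int.ofNat n) (eps (Int.ofNat n))
  | Int.negSucc 0 => epsStepInv G η (Int.negSucc 0) (eps (Int.ofNat 0))
  | Int.negSucc (n + 1) => epsStepInv G η (Int.negSucc (n + 1)) (eps (Int.negSucc n))
  termination_by j => j.natAbs

lemma epsStep_epsStepInv (j : ℤ) (e : ∀ Y : C, G.obj ((shiftFunctor C (j + 1)).obj Y) ≅ G.obj Y)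
    (Y : C) : epsStep G η j (epsStepInv G η j e) Y = e Y := by
  ext
  simp [epsStep, epsStepInv, ← Functor.map_comp_assoc]

lemma eps_zero (Y : C) : eps G η 0 Y = G.mapIso ((shiftFunctorZero C ℤ).app Y) := by
  show eps G η (Int.ofNat 0) Y = _
  rw [eps]

lemma eps_succ (j : ℤ) (Y : C) : eps G η (j + 1) Y = epsStep G η j (eps G η j) Y := by
  obtain (n | n) := j
  · show eps G η (Int.ofNat (n + 1)) Y = _
    rw [eps]
  · obtain (_ | n) := n
    · show eps G η (Int.ofNat 0) Y = _
      conv_rhs => rw [eps]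
      rw [epsStep_epsStepInv]
    · show eps G η (Int.negSucc n) Y = _
      conv_rhs => rw [eps]
      rw [epsStep_epsStepInv]

lemma eps_eqToHom {j j' : ℤ} (h : j = j') (Y : C) :
    (eps G η j Y).hom = eqToHom (by rw [h]) ≫ (eps G η j' Y).hom := by
  subst h; simp

lemma eps_pred (j : ℤ) (Y : C) :
    eps G η j Y = (η.app ((shiftFunctor C j).obj Y)).symm ≪≫
      (G.mapIso ((shiftFunctorAdd' C j 1 (j + 1) rfl).app Y)).symm ≪≫ eps G η (j + 1) Y := by
  rw [eps_succ]
  ext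
  simp [epsStep, ← Functor.map_comp_assoc]

lemma eps_natural_up (j : ℤ)
    (ih : ∀ {Y Y' : C} (g : Y ⟶ Y'), G.map ((shiftFunctor C j).map g) ≫ (eps G η j Y').hom =
      (eps G η j Y).hom ≫ G.map g) {Y Y' : C} (g : Y ⟶ Y') :
    G.map ((shiftFunctor C (j + 1)).map g) ≫ (eps G η (j + 1) Y').hom =
      (eps G η (j + 1) Y).hom ≫ G.map g := by
  rw [eps_succ, eps_succ]
  simp only [epsStep, Iso.trans_hom, Iso.app_hom, Functor.mapIso_hom, Category.assoc]
  rw [← Category.assoc, ← G.map_comp,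
    (shiftFunctorAdd' C j 1 (j + 1) rfl).hom.naturality g, G.map_comp, Category.assoc]
  congr 1
  have hη := η.hom.naturality ((shiftFunctor C j).map g)
  simp only [Functor.comp_obj, Functor.comp_map] at hη ⊢
  rw [← Category.assoc, hη, Category.assoc, ih]

lemma eps_natural_down (j : ℤ)
    (ih : ∀ {Y Y' : C} (g : Y ⟶ Y'),
      G.map ((shiftFunctor C (j + 1)).map g) ≫ (eps G η (j + 1) Y').hom =
      (eps G η (j + 1) Y).hom ≫ G.map g) {Y Y' : C} (g : Y ⟶ Y') :
    G.map ((shiftFunctor C j).map g) ≫ (eps G η j Y').hom =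
      (eps G η j Y).hom ≫ G.map g := by
  have h := ih g
  rw [eps_succ, eps_succ] at h
  simp only [epsStep, Iso.trans_hom, Iso.app_hom, Functor.mapIso_hom, Category.assoc] at h
  rw [← Category.assoc, ← G.map_comp,
    (shiftFunctorAdd' C j 1 (j + 1) rfl).hom.naturality g, G.map_comp, Category.assoc] at h
  have hη := η.hom.naturality ((shiftFunctor C j).map g)
  simp only [Functor.comp_obj, Functor.comp_map] at hη h
  rw [reassoc_of% hη] at h
  rwa [cancel_epi, cancel_epi] at h

lemma eps_natural (j : ℤ) {Y Y' : C} (g : Y ⟶ Y') :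
    G.map ((shiftFunctor C j).map g) ≫ (eps G η j Y').hom =
      (eps G η j Y).hom ≫ G.map g := by
  induction j using Int.induction_on generalizing Y Y' with
  | zero =>
    simp only [eps_zero, Functor.mapIso_hom]
    rw [← G.map_comp, ← G.map_comp]
    congr 1
    simpa using (shiftFunctorZero C ℤ).hom.naturality g
  | succ i ih => exact eps_natural_up G η i (fun g => ih g) g
  | pred i ih =>
    refine eps_natural_down G η _ (fun {Y Y'} g => ?_) g
    rw [show (-(i : ℤ) - 1) + 1 = -(i : ℤ) by ring]
    exact ih g
lemma eqToHom_shiftZero_natural {X X' : C} (h : X = X') {W : D'} (w : G.obj X' ⟶ W) :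
    G.map ((shiftFunctorZero C ℤ).hom.app X) ≫ eqToHom (by simp [h]) ≫ w =
      eqToHom (show G.obj ((shiftFunctor C (0 : ℤ)).obj X) =
        G.obj ((shiftFunctor C (0 : ℤ)).obj X') by rw [h]) ≫
        G.map ((shiftFunctorZero C ℤ).hom.app X') ≫ w := by
  subst h; simp

lemma eps_comp_zero (s : ℤ) (Z : C) :
    G.map ((shiftFunctorAdd' C s 0 (0 + s) (add_comm s 0)).inv.app Z) ≫
        (eps G η (0 + s) Z).hom =
      (eps G η 0 ((shiftFunctor C s).obj Z)).hom ≫ (eps G η s Z).hom := by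
  rw [sfa_congr s 0 s (0 + s) (add_zero s) (zero_add s).symm Z,
    shiftFunctorAdd'_add_zero_inv_app, eps_eqToHom G η (zero_add s), eps_zero]
  simp only [Functor.map_comp, Category.assoc, eqToHom_map, Functor.mapIso_hom, Iso.app_hom]
  simp [eqToHom_trans]

lemma eps_comp_up (r s : ℤ) (Z : C)
    (ih : G.map ((shiftFunctorAdd' C s r (r + s) (add_comm s r)).inv.app Z) ≫
        (eps G η (r + s) Z).hom =
      (eps G η r ((shiftFunctor C s).obj Z)).hom ≫ (eps G η s Z).hom) :
    G.map ((shiftFunctorAdd' C s (r + 1) ((r + 1) + s) (add_comm s (r + 1))).inv.app Z) ≫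
        (eps G η ((r + 1) + s) Z).hom =
      (eps G η (r + 1) ((shiftFunctor C s).obj Z)).hom ≫ (eps G η s Z).hom := by
  have coh := shiftFunctorAdd'_assoc_inv_app (C := C) s r 1 (r + s) (r + 1) ((r + 1) + s)
    (add_comm s r) rfl (by omega) Z
  have key : (shiftFunctorAdd' C s (r + 1) ((r + 1) + s) (add_comm s (r + 1))).inv.app Z =
      (shiftFunctorAdd' C r 1 (r + 1) rfl).hom.app ((shiftFunctor C s).obj Z) ≫
      (shiftFunctor C (1 : ℤ)).map ((shiftFunctorAdd' C s r (r + s) (add_comm s r)).inv.app Z) ≫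
      (shiftFunctorAdd' C (r + s) 1 ((r + 1) + s) (by omega)).inv.app Z := by
    rw [coh, ← Category.assoc, Iso.hom_inv_id_app, Category.id_comp]
  rw [key, eps_eqToHom G η (show (r + 1) + s = (r + s) + 1 by omega), eps_succ, eps_succ]
  rw [sfa_congr (r + s) 1 ((r + s) + 1) ((r + 1) + s) rfl (by omega) Z]
  simp only [epsStep, Iso.trans_hom, Iso.app_hom, Functor.mapIso_hom, Functor.map_comp,
    Category.assoc, eqToHom_map, eqToHom_trans, eqToHom_refl, Category.id_comp]
  rw [eqToHom_trans_assoc, eqToHom_refl, Category.id_comp]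
  rw [← Functor.map_comp_assoc G ((shiftFunctorAdd' C (r + s) 1 ((r + s) + 1) rfl).inv.app Z),
    Iso.inv_hom_id_app, CategoryTheory.Functor.map_id, Category.id_comp]
  congr 1
  have hη := η.hom.naturality ((shiftFunctorAdd' C s r (r + s) (add_comm s r)).inv.app Z)
  simp only [Functor.comp_obj, Functor.comp_map] at hη
  rw [reassoc_of% hη, ih]

lemma eps_comp_down (r s : ℤ) (Z : C)
    (h : G.map ((shiftFunctorAdd' C s (r + 1) ((r + 1) + s) (add_comm s (r + 1))).inv.app Z) ≫
        (eps G η ((r + 1) + s) Z).hom =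
      (eps G η (r + 1) ((shiftFunctor C s).obj Z)).hom ≫ (eps G η s Z).hom) :
    G.map ((shiftFunctorAdd' C s r (r + s) (add_comm s r)).inv.app Z) ≫
        (eps G η (r + s) Z).hom =
      (eps G η r ((shiftFunctor C s).obj Z)).hom ≫ (eps G η s Z).hom := by
  have coh := shiftFunctorAdd'_assoc_inv_app (C := C) s r 1 (r + s) (r + 1) ((r + 1) + s)
    (add_comm s r) rfl (by omega) Z
  have key : (shiftFunctorAdd' C s (r + 1) ((r + 1) + s) (add_comm s (r + 1))).inv.app Z =
      (shiftFunctorAdd' C r 1 (r + 1) rfl).hom.app ((shiftFunctor C s).obj Z) ≫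
      (shiftFunctor C (1 : ℤ)).map ((shiftFunctorAdd' C s r (r + s) (add_comm s r)).inv.app Z) ≫
      (shiftFunctorAdd' C (r + s) 1 ((r + 1) + s) (by omega)).inv.app Z := by
    rw [coh, ← Category.assoc, Iso.hom_inv_id_app, Category.id_comp]
  rw [key, eps_eqToHom G η (show (r + 1) + s = (r + s) + 1 by omega), eps_succ, eps_succ] at h
  rw [sfa_congr (r + s) 1 ((r + s) + 1) ((r + 1) + s) rfl (by omega) Z] at h
  simp only [epsStep, Iso.trans_hom, Iso.app_hom, Functor.mapIso_hom, Functor.map_comp,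
    Category.assoc, eqToHom_map, eqToHom_trans, eqToHom_refl, Category.id_comp] at h
  rw [eqToHom_trans_assoc, eqToHom_refl, Category.id_comp] at h
  rw [← Functor.map_comp_assoc G ((shiftFunctorAdd' C (r + s) 1 ((r + s) + 1) rfl).inv.app Z),
    Iso.inv_hom_id_app, CategoryTheory.Functor.map_id, Category.id_comp] at h
  have hη := η.hom.naturality ((shiftFunctorAdd' C s r (r + s) (add_comm s r)).inv.app Z)
  simp only [Functor.comp_obj, Functor.comp_map] at hη
  rw [reassoc_of% hη] at h
  rwa [cancel_epi, cancel_epi] at h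

lemma eps_comp (r s : ℤ) (Z : C) :
    G.map ((shiftFunctorAdd' C s r (r + s) (add_comm s r)).inv.app Z) ≫
        (eps G η (r + s) Z).hom =
      (eps G η r ((shiftFunctor C s).obj Z)).hom ≫ (eps G η s Z).hom := by
  induction r using Int.induction_on with
  | zero => exact eps_comp_zero G η s Z
  | succ i ih => exact eps_comp_up G η i s Z ih
  | pred i ih =>
    refine eps_comp_down G η _ s Z ?_
    rw [show (-(i : ℤ) - 1) + 1 = -(i : ℤ) by ring]
    exact ih

end Eps

section Glue

variable {C}

lemma oproj_comp {X Y Z : C} (f : X ⟶ Y) (g : Y ⟶ Z) :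
    oprojMap C (f ≫ g) = ocomp C (oprojMap C f) (oprojMap C g) := by
  rw [oprojMap, oprojMap, oprojMap, ocomp_of, hcomp_e₀_left]
  rw [of_congr (show (0 : ℤ) = 0 + 0 by omega) (e₀ C (f ≫ g))]
  congr 1
  simp [e₀]

variable (G : C ⥤ D) [G.Additive] (η : shiftFunctor C (1 : ℤ) ⋙ G ≅ G)

lemma inducedMap_of (ε : ∀ (j : ℤ) (Y : C), G.obj ((shiftFunctor C j).obj Y) ≅ G.obj Y)
    (j : ℤ) {X Y : Orbit C} (f : X.un ⟶ (shiftFunctor C j).obj Y.un) :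
    inducedMap C G ε (DirectSum.of (fun i => X.un ⟶ (shiftFunctor C i).obj Y.un) j f) =
      G.map f ≫ (ε j Y.un).hom := by
  rw [inducedMap, DirectSum.toAddMonoid_of]
  rfl

lemma inducedMap_zero (ε : ∀ (j : ℤ) (Y : C), G.obj ((shiftFunctor C j).obj Y) ≅ G.obj Y)
    {X Y : Orbit C} : inducedMap C G ε (0 : OrbitHom C X.un Y.un) = 0 :=
  map_zero (DirectSum.toAddMonoid _)

lemma inducedMap_add (ε : ∀ (j : ℤ) (Y : C), G.obj ((shiftFunctor C j).obj Y) ≅ G.obj Y)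
    {X Y : Orbit C} (f g : OrbitHom C X.un Y.un) :
    inducedMap C G ε (f + g) = inducedMap C G ε f + inducedMap C G ε g :=
  map_add (DirectSum.toAddMonoid _) f g

lemma induced_id (X : Orbit C) :
    inducedMap C G (eps G η) (𝟙 X) = 𝟙 (G.obj X.un) := by
  show inducedMap C G (eps G η) (DirectSum.of _ 0 (e₀ C (𝟙 X.un))) = _
  rw [inducedMap_of G (eps G η) 0 (e₀ C (𝟙 X.un)), eps_zero]
  simp only [e₀, Category.id_comp, Functor.mapIso_hom, Iso.app_hom, ← G.map_comp]
  simp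

lemma induced_comp {X Y Z : Orbit C} (f : X ⟶ Y) (g : Y ⟶ Z) :
    inducedMap C G (eps G η) (ocomp C f g) =
      inducedMap C G (eps G η) f ≫ inducedMap C G (eps G η) g := by
  induction f using DirectSum.induction_on with
  | zero =>
    simp only [map_zero, AddMonoidHom.zero_apply, inducedMap_zero, Limits.zero_comp]
  | add f f' hf hf' =>
    simp only [map_add, AddMonoidHom.add_apply, inducedMap_add, hf, hf', Preadditive.add_comp]
  | of r f =>
    induction g using DirectSum.induction_on with
    | zero =>
      simp only [map_zero, inducedMap_zero, Limits.comp_zero]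
    | add g g' hg hg' =>
      simp only [map_add, inducedMap_add, hg, hg', Preadditive.comp_add]
    | of s g =>
      rw [ocomp_of, inducedMap_of G _ (r + s) (hcomp C f g), inducedMap_of G _ r f,
        inducedMap_of G _ s g]
      simp only [hcomp, Functor.map_comp, Category.assoc]
      rw [eps_comp G η r s Z.un]
      rw [reassoc_of% (eps_natural G η r g)]

end Glue
/-- Let `C` be an additive category, `F : C → C` an additive
automorphism, `D` an additive category, and `G : C → D` an additive functor equipped
with a natural isomorphism `η : G ∘ F ≅ G`. Then `G` factors through the projection:
there exists an additive functor `H : C/F → D` which agrees with `G` on objects, sends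
a homogeneous morphism `f : X → F^j Y` of degree `j` to the composite of `G(f)` with
the isomorphism `G(F^j Y) ≅ G(Y)` obtained by iterating `η`, and satisfies
`H ∘ π = G` as functors `C → D`. -/
theorem statement5 (G : C ⥤ D) [G.Additive] (η : shiftFunctor C (1 : ℤ) ⋙ G ≅ G) :
    ∃ (h₁ : ∀ {X Y : Orbit C} (f : X ⟶ Y), 𝟙 X ≫ f = f)
      (h₂ : ∀ {X Y : Orbit C} (f : X ⟶ Y), f ≫ 𝟙 Y = f)
      (h₃ : ∀ {W X Y Z : Orbit C} (f : W ⟶ X) (g : X ⟶ Y) (h : Y ⟶ Z),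
        (f ≫ g) ≫ h = f ≫ g ≫ h)
      (hadd : ∀ (X Y Z : Orbit C) (f f' : X ⟶ Y) (g : Y ⟶ Z),
        (f + f') ≫ g = f ≫ g + f' ≫ g)
      (hadd' : ∀ (X Y Z : Orbit C) (f : X ⟶ Y) (g g' : Y ⟶ Z),
        f ≫ (g + g') = f ≫ g + f ≫ g')
      (p : ∀ {X Y Z : C} (f : X ⟶ Y) (g : Y ⟶ Z),
        oprojMap C (f ≫ g) = ocomp C (oprojMap C f) (oprojMap C g)),
      Statement5Body C @h₁ @h₂ @h₃ hadd hadd' @p G η := by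
  refine ⟨fun {X Y} f => orbit_id_comp f, fun {X Y} f => orbit_comp_id f,
    fun {W X Y Z} f g h => orbit_assoc f g h,
    fun X Y Z f f' g => by
      show ocomp C (f + f') g = ocomp C f g + ocomp C f' g
      rw [map_add, AddMonoidHom.add_apply],
    fun X Y Z f g g' => (ocomp C f).map_add g g',
    fun {X Y Z} f g => oproj_comp f g, ?_⟩
  unfold Statement5Body
  letI cat : Category (Orbit C) := orbitCategory C (fun {X Y} f => orbit_id_comp f)
    (fun {X Y} f => orbit_comp_id f) (fun {W X Y Z} f g h => orbit_assoc f g h)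
  letI pre : Preadditive (Orbit C) :=
    { homGroup := fun X Y => (inferInstance : AddCommGroup (OrbitHom C X.un Y.un)),
      add_comp := fun X Y Z (f f' : OrbitHom C X.un Y.un) (g : OrbitHom C Y.un Z.un) => by
        show ocomp C (f + f') g = ocomp C f g + ocomp C f' g
        rw [map_add, AddMonoidHom.add_apply],
      comp_add := fun X Y Z f g g' => (ocomp C f).map_add g g' }
  refine ⟨eps G η, fun Y => eps_zero G η Y, fun j Y => eps_succ G η j Y,
    fun X => induced_id G η X, fun {X Y Z} f g => induced_comp G η f g, ?_, ?_,
    fun j X Y f => inducedMap_of G (eps G η) j f, ?_⟩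
  · exact { map_add := fun {X Y f g} => inducedMap_add G (eps G η) f g }
  · exact fun X => rfl
  · refine CategoryTheory.Functor.ext (fun X => rfl) (fun X Y f => ?_)
    show inducedMap C G (eps G η) (oprojMap C f) = _
    rw [oprojMap, inducedMap_of G (eps G η) 0 (e₀ C f), eps_zero]
    simp only [e₀, Functor.mapIso_hom, Iso.app_hom, Functor.map_comp, Category.assoc,
      eqToHom_refl, Category.comp_id, Category.id_comp]
    rw [← G.map_comp, Iso.inv_hom_id_app]
    simp
    erw [eqToHom_refl, eqToHom_refl, Category.id_comp, Category.comp_id]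

end OrbitFormalization
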